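/- Let n, m ≥ 1, let L ≥ 0, let p ∈ ℝ with p ≥ 1, and let f : ℝ^n → ℝ^m satisfy ‖f(x) − f(y)‖_∞ ≤ L ‖x − y‖_∞ for all x, y ∈ ℝ^n, where ‖v‖_∞ = max_i |v_i|. Define softmax : ℝ^m → ℝ^m by softmax(z)_i = exp(z_i)/∑_j exp(z_j). Then for all x, y ∈ ℝ^n: (1/2) ∑_{i=1}^m |softmax(f(x))_i − softmax(f(y))_i| ≤ (m²/2) · L · (∑_{j=1}^n |x_j − y_j|^p)^{1/p}. -/
import Mathlib


/-- The softmax function, mapping `ℝ^m` to the probability simplex. -/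
noncomputable def softmax {m : ℕ} (z : Fin m → ℝ) : Fin m → ℝ :=
  fun i => Real.exp (z i) / ∑ j : Fin m, Real.exp (z j)

lemma softmax_sum_pos {m : ℕ} (hm : 0 < m) (z : Fin m → ℝ) :
    0 < ∑ j : Fin m, Real.exp (z j) := by
  haveI : NeZero m := ⟨hm.ne'⟩
  exact Finset.sum_pos (fun j _ => Real.exp_pos _) Finset.univ_nonempty

lemma softmax_nonneg {m : ℕ} (hm : 0 < m) (z : Fin m → ℝ) (i : Fin m) :
    0 ≤ softmax z i :=
  div_nonneg (Real.exp_pos _).le (softmax_sum_pos hm z).le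

lemma softmax_sum_one {m : ℕ} (hm : 0 < m) (z : Fin m → ℝ) :
    ∑ i : Fin m, softmax z i = 1 := by
  unfold softmax
  rw [← Finset.sum_div, div_self (softmax_sum_pos hm z).ne']

lemma softmax_ratio {m : ℕ} (hm : 0 < m) (a b : Fin m → ℝ) (d : ℝ)
    (hab : ∀ i, |a i - b i| ≤ d) (i : Fin m) :
    Real.exp (-(2*d)) * softmax b i ≤ softmax a i := by
  have hSa := softmax_sum_pos hm a
  have hSb := softmax_sum_pos hm b
  have hnum : Real.exp (-d) * Real.exp (b i) ≤ Real.exp (a i) := by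
    rw [← Real.exp_add]
    exact Real.exp_le_exp.2 (by have := abs_le.1 (hab i); linarith)
  have hden : ∑ j : Fin m, Real.exp (a j) ≤ Real.exp d * ∑ j : Fin m, Real.exp (b j) := by
    rw [Finset.mul_sum]
    refine Finset.sum_le_sum fun j _ => ?_
    rw [← Real.exp_add]
    exact Real.exp_le_exp.2 (by have := abs_le.1 (hab j); linarith)
  have key : Real.exp (-(2*d)) * softmax b i
      = (Real.exp (-d) * Real.exp (b i)) / (Real.exp d * ∑ j : Fin m, Real.exp (b j)) := by
    unfold softmax
    have h2 : Real.exp (-(2*d)) = Real.exp (-d) / Real.exp d := by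
      rw [← Real.exp_sub]; ring_nf
    rw [h2, div_mul_div_comm]
  rw [key]
  exact div_le_div₀ (Real.exp_pos _).le hnum hSa hden

/-- Lipschitzness of a categorical policy: a network `f` that is `L`-Lipschitz
with respect to sup norms, followed by a softmax output layer, is
`(m²/2)·L`-Lipschitz from the input `p`-norm to total variation distance. -/
theorem categorical_policy_lipschitz
    (n m : ℕ) (hn : 1 ≤ n) (hm : 1 ≤ m) (L p : ℝ) (hL : 0 ≤ L) (hp : 1 ≤ p)
    (f : (Fin n → ℝ) → Fin m → ℝ)
    (hf : ∀ x y : Fin n → ℝ,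
      (⨆ i : Fin m, |f x i - f y i|) ≤ L * ⨆ j : Fin n, |x j - y j|) :
    ∀ x y : Fin n → ℝ,
      (1 / 2) * ∑ i : Fin m, |softmax (f x) i - softmax (f y) i|
        ≤ ((m : ℝ) ^ 2 / 2) * L * (∑ j : Fin n, |x j - y j| ^ p) ^ (1 / p) := by
  intro x y
  have hp0 : 0 < p := lt_of_lt_of_le one_pos hp
  set Np : ℝ := (∑ j : Fin n, |x j - y j| ^ p) ^ (1 / p) with hNp
  have hNp0 : 0 ≤ Np := by positivity
  -- sup norm ≤ p norm
  have hsup_le : (⨆ j : Fin n, |x j - y j|) ≤ Np := by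
    haveI : Nonempty (Fin n) := ⟨⟨0, hn⟩⟩
    refine ciSup_le fun j => ?_
    have h1 : |x j - y j| = (|x j - y j| ^ p) ^ (1 / p) := by
      rw [one_div, Real.rpow_rpow_inv (abs_nonneg _) hp0.ne']
    rw [h1]
    exact Real.rpow_le_rpow (by positivity)
      (Finset.single_le_sum (f := fun j => |x j - y j| ^ p) (fun j _ => by positivity) (Finset.mem_univ j))
      (by positivity)
  have hsup0 : 0 ≤ ⨆ j : Fin n, |x j - y j| :=
    Real.iSup_nonneg fun j => abs_nonneg _
  set d : ℝ := L * ⨆ j : Fin n, |x j - y j| with hd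
  have hd0 : 0 ≤ d := mul_nonneg hL hsup0
  have hab : ∀ i, |f x i - f y i| ≤ d := fun i =>
    (le_ciSup (Set.Finite.bddAbove (Set.finite_range _)) i).trans (hf x y)
  have hdNp : d ≤ L * Np := mul_le_mul_of_nonneg_left hsup_le hL
  -- case m = 1
  rcases hm.eq_or_lt with heq | hm2
  · have : m = 1 := heq.symm
    subst this
    have h0 : ∀ z : Fin 1 → ℝ, softmax z 0 = 1 := fun z => by
      simp [softmax, div_self (Real.exp_ne_zero _)]
    rw [Fin.sum_univ_one, h0, h0]
    simp only [sub_self, abs_zero, mul_zero]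
    positivity
  -- m ≥ 2
  have hm0 : 0 < m := hm
  have hratio := softmax_ratio hm0 (f x) (f y) d hab
  have hratio' := softmax_ratio hm0 (f y) (f x) d (fun i => by rw [abs_sub_comm]; exact hab i)
  have hexp : 1 - Real.exp (-(2*d)) ≤ 2 * d := by
    have := Real.add_one_le_exp (-(2*d))
    linarith
  have hexp0 : Real.exp (-(2*d)) ≤ 1 := Real.exp_le_one_iff.2 (by linarith)
  have hbound : ∀ i : Fin m, |softmax (f x) i - softmax (f y) i|
      ≤ (1 - Real.exp (-(2*d))) * (softmax (f x) i + softmax (f y) i) := by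
    intro i
    have h1 := hratio i
    have h2 := hratio' i
    have h3 := softmax_nonneg hm0 (f x) i
    have h4 := softmax_nonneg hm0 (f y) i
    rcases le_total (softmax (f x) i) (softmax (f y) i) with h5 | h5
    · rw [abs_of_nonpos (by linarith)]; nlinarith
    · rw [abs_of_nonneg (by linarith)]; nlinarith
  have hsum : ∑ i : Fin m, |softmax (f x) i - softmax (f y) i|
      ≤ (1 - Real.exp (-(2*d))) * 2 := by
    calc ∑ i : Fin m, |softmax (f x) i - softmax (f y) i|
        ≤ ∑ i : Fin m, (1 - Real.exp (-(2*d))) * (softmax (f x) i + softmax (f y) i) :=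
          Finset.sum_le_sum fun i _ => hbound i
      _ = (1 - Real.exp (-(2*d))) * 2 := by
          rw [← Finset.mul_sum, Finset.sum_add_distrib,
            softmax_sum_one hm0, softmax_sum_one hm0]
          norm_num
  have hm4 : (4:ℝ) ≤ (m:ℝ)^2 := by
    have : (2:ℝ) ≤ (m:ℝ) := by exact_mod_cast hm2
    nlinarith
  have hLNp : 0 ≤ L * Np := mul_nonneg hL hNp0
  calc (1 / 2) * ∑ i : Fin m, |softmax (f x) i - softmax (f y) i|
      ≤ (1 / 2) * ((1 - Real.exp (-(2*d))) * 2) := by linarith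
    _ ≤ 2 * d := by linarith
    _ ≤ 2 * (L * Np) := by linarith
    _ ≤ ((m : ℝ) ^ 2 / 2) * L * Np := by nlinarith
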